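/- Fix l ≥ 2, h ≤ l, and a correct key k* : Fin l → Bool. Then the minimum, over all incorrect keys k ≠ k*, of the number of l-bit words i such that exactly one of HD(i,k*) = h and HD(i,k) = h holds equals 2·(C(l,h) − M), where M is the maximum of C(x,x/2)·C(l−x,h−x/2) over even integers x with 2 ≤ x ≤ l, and binomial coefficients C(a,b) are 0 when b < 0 or b > a. -/

import Mathlib

/-- Hamming distance between `l`-bit words. -/
def HD {l : ℕ} (a b : Fin l → Bool) : ℕ :=
  (Finset.univ.filter (fun j => a j ≠ b j)).card

open Finset
open scoped symmDiff

namespace SFLLAux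

variable {l : ℕ}

lemma count_words (kstar : Fin l → Bool) (P : Finset (Fin l) → Prop) [DecidablePred P] :
    (Finset.univ.filter (fun i : Fin l → Bool =>
        P (Finset.univ.filter (fun j => i j ≠ kstar j)))).card
      = (Finset.univ.powerset.filter P).card := by
  have key : ∀ A : Finset (Fin l),
      (Finset.univ.filter fun j => xor (decide (j ∈ A)) (kstar j) ≠ kstar j) = A := by
    intro A; ext j
    simp only [mem_filter, mem_univ, true_and]
    cases hk : kstar j <;> by_cases hj : j ∈ A <;> simp [hj, hk]
  refine Finset.card_bij' (fun i _ => Finset.univ.filter (fun j => i j ≠ kstar j))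
    (fun A _ => fun j => xor (decide (j ∈ A)) (kstar j)) ?_ ?_ ?_ ?_
  · intro i hi
    simp only [mem_filter, mem_univ, true_and] at hi
    simp only [mem_filter, mem_powerset]
    exact ⟨Finset.subset_univ _, hi⟩
  · intro A hA
    simp only [mem_filter, mem_powerset, mem_univ, true_and] at hA ⊢
    rw [key]
    exact hA.2
  · intro i _
    funext j
    show (decide (j ∈ Finset.univ.filter fun j => i j ≠ kstar j) ^^ kstar j) = i j
    rw [show decide (j ∈ Finset.univ.filter fun j => i j ≠ kstar j)
        = decide (i j ≠ kstar j) by simp [mem_filter]]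
    cases hk : kstar j <;> cases hij : i j <;> simp [hij, hk]
  · intro A _
    exact key A

lemma card_hd (k : Fin l → Bool) (h : ℕ) :
    (Finset.univ.filter fun i : Fin l → Bool => HD i k = h).card = l.choose h := by
  have := count_words k (fun A => A.card = h)
  simp only [HD]
  rw [← Finset.powersetCard_eq_filter, Finset.card_powersetCard, Finset.card_univ,
    Fintype.card_fin] at this
  exact this

lemma filter_ne (kstar k i : Fin l → Bool) :
    (Finset.univ.filter fun j => i j ≠ k j)
      = (Finset.univ.filter fun j => i j ≠ kstar j) ∆
        (Finset.univ.filter fun j => k j ≠ kstar j) := by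
  ext j
  simp only [Finset.mem_symmDiff, mem_filter, mem_univ, true_and]
  cases i j <;> cases k j <;> cases kstar j <;> simp

lemma card_symmDiff' (A S : Finset (Fin l)) :
    (A ∆ S).card + 2 * (A ∩ S).card = A.card + S.card := by
  have h1 : (A \ S).card + (A ∩ S).card = A.card := Finset.card_sdiff_add_card_inter A S
  have h2 : (S \ A).card + (S ∩ A).card = S.card := Finset.card_sdiff_add_card_inter S A
  have h3 : (A ∆ S).card = (A \ S).card + (S \ A).card := by
    rw [symmDiff_def, Finset.sup_eq_union]
    exact Finset.card_union_of_disjoint disjoint_sdiff_sdiff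
  rw [Finset.inter_comm] at h2
  omega

lemma xor_card {α : Type*} (s : Finset α) (p q : α → Prop) [DecidablePred p] [DecidablePred q] :
    (s.filter fun a => Xor (p a) (q a)).card + 2 * (s.filter fun a => p a ∧ q a).card
      = (s.filter p).card + (s.filter q).card := by
  simp only [Finset.card_filter]
  rw [Finset.mul_sum, ← Finset.sum_add_distrib, ← Finset.sum_add_distrib]
  refine Finset.sum_congr rfl fun a _ => ?_
  by_cases hp : p a <;> by_cases hq : q a <;> simp [hp, hq, Xor]

lemma card_both (kstar k : Fin l → Bool) (h : ℕ) :
    (Finset.univ.filter fun i : Fin l → Bool => HD i kstar = h ∧ HD i k = h).card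
      = (if Even (HD k kstar) ∧ HD k kstar / 2 ≤ h
         then (HD k kstar).choose (HD k kstar / 2) *
              (l - HD k kstar).choose (h - HD k kstar / 2)
         else 0) := by
  set S : Finset (Fin l) := Finset.univ.filter fun j => k j ≠ kstar j with hS
  have hx : HD k kstar = S.card := rfl
  have hrw : (Finset.univ.filter fun i : Fin l → Bool => HD i kstar = h ∧ HD i k = h)
      = Finset.univ.filter (fun i : Fin l → Bool =>
          (Finset.univ.filter fun j => i j ≠ kstar j).card = h ∧
          ((Finset.univ.filter fun j => i j ≠ kstar j) ∆ S).card = h) := by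
    refine Finset.filter_congr fun i _ => ?_
    rw [HD, HD, filter_ne kstar k i]
  rw [hrw, count_words kstar (fun A => A.card = h ∧ (A ∆ S).card = h), hx]
  by_cases hcase : Even S.card ∧ S.card / 2 ≤ h
  · rw [if_pos hcase]
    obtain ⟨⟨r, hr⟩, hle⟩ := hcase
    have hm : S.card / 2 = r := by omega
    rw [hm] at hle ⊢
    have hcard : (Finset.univ.powerset.filter
          fun A : Finset (Fin l) => A.card = h ∧ (A ∆ S).card = h).card
        = ((Finset.powersetCard r S) ×ˢ (Finset.powersetCard (h - r) Sᶜ)).card := by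
      refine Finset.card_bij' (fun A _ => (A ∩ S, A \ S)) (fun p _ => p.1 ∪ p.2) ?_ ?_ ?_ ?_
      · intro A hA
        simp only [mem_filter, mem_powerset] at hA
        obtain ⟨-, hA1, hA2⟩ := hA
        have hsd := card_symmDiff' A S
        have hInt : (A ∩ S).card = r := by omega
        have hsd2 : (A \ S).card + (A ∩ S).card = A.card := Finset.card_sdiff_add_card_inter A S
        simp only [Finset.mem_product, Finset.mem_powersetCard]
        refine ⟨⟨Finset.inter_subset_right, hInt⟩, ?_, by omega⟩
        intro j hj
        simp only [Finset.mem_sdiff] at hj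
        simp [hj.2]
      · intro p hp
        simp only [Finset.mem_product, Finset.mem_powersetCard] at hp
        obtain ⟨⟨hB, hBc⟩, hC, hCc⟩ := hp
        have hdisj : Disjoint p.1 p.2 := by
          rw [Finset.disjoint_left]
          intro a ha hac
          exact (Finset.mem_compl.mp (hC hac)) (hB ha)
        have hUc : (p.1 ∪ p.2).card = h := by
          rw [Finset.card_union_of_disjoint hdisj, hBc, hCc]; omega
        have hIS : (p.1 ∪ p.2) ∩ S = p.1 := by
          ext a
          simp only [Finset.mem_inter, Finset.mem_union]
          constructor
          · rintro ⟨ha | ha, haS⟩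
            · exact ha
            · exact absurd haS (Finset.mem_compl.mp (hC ha))
          · intro ha; exact ⟨Or.inl ha, hB ha⟩
        have hsd := card_symmDiff' (p.1 ∪ p.2) S
        rw [hIS, hBc, hUc] at hsd
        simp only [mem_filter, mem_powerset]
        exact ⟨Finset.subset_univ _, hUc, by omega⟩
      · intro A _
        ext a
        simp only [Finset.mem_union, Finset.mem_inter, Finset.mem_sdiff]
        tauto
      · intro p hp
        simp only [Finset.mem_product, Finset.mem_powersetCard] at hp
        obtain ⟨⟨hB, hBc⟩, hC, hCc⟩ := hp
        have h1 : (p.1 ∪ p.2) ∩ S = p.1 := by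
          ext a
          simp only [Finset.mem_inter, Finset.mem_union]
          constructor
          · rintro ⟨ha | ha, haS⟩
            · exact ha
            · exact absurd haS (Finset.mem_compl.mp (hC ha))
          · intro ha; exact ⟨Or.inl ha, hB ha⟩
        have h2 : (p.1 ∪ p.2) \ S = p.2 := by
          ext a
          simp only [Finset.mem_sdiff, Finset.mem_union]
          constructor
          · rintro ⟨ha | ha, haS⟩
            · exact absurd (hB ha) haS
            · exact ha
          · intro ha; exact ⟨Or.inr ha, Finset.mem_compl.mp (hC ha)⟩
        show ((p.1 ∪ p.2) ∩ S, (p.1 ∪ p.2) \ S) = p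
        rw [h1, h2]
    rw [hcard, Finset.card_product, Finset.card_powersetCard, Finset.card_powersetCard,
      Finset.card_compl, Fintype.card_fin]
  · rw [if_neg hcase]
    rw [Finset.card_eq_zero, Finset.filter_eq_empty_iff]
    intro A _
    rintro ⟨hA1, hA2⟩
    have hsd := card_symmDiff' A S
    have hle : (A ∩ S).card ≤ A.card := Finset.card_le_card Finset.inter_subset_left
    exact hcase ⟨⟨(A ∩ S).card, by omega⟩, by omega⟩

lemma card_lt_filter (x : ℕ) (hx : x ≤ l) :
    (Finset.univ.filter fun j : Fin l => (j : ℕ) < x).card = x := by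
  rw [← Finset.card_range x]
  refine Finset.card_bij' (fun j _ => (j : ℕ))
    (fun n hn => ⟨n, lt_of_lt_of_le (Finset.mem_range.mp hn) hx⟩) ?_ ?_ ?_ ?_
  · intro j hj
    simpa using (mem_filter.mp hj).2
  · intro n hn
    simp [Finset.mem_range.mp hn]
  · intro j _
    rfl
  · intro n _
    rfl

end SFLLAux

/-- SFLL-HD minimum per-key error count: the minimum, over incorrect keys `k ≠ k*`,
of the number of words `i` on which exactly one of `HD(i,k*) = h`, `HD(i,k) = h`
holds, equals `2·(C(l,h) − M)` where `M` is the maximum of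
`C(x,x/2)·C(l−x,h−x/2)` over even `x` with `2 ≤ x ≤ l` (binomial coefficients
being `0` for negative lower index, via the `if` guard). -/
theorem sfll_hd_min_per_key_error {l : ℕ} (hl : 2 ≤ l) (h : ℕ) (hh : h ≤ l)
    (kstar : Fin l → Bool) :
    IsLeast {c : ℕ | ∃ k : Fin l → Bool, k ≠ kstar ∧
        c = (Finset.univ.filter (fun i : Fin l → Bool =>
          Xor (HD i kstar = h) (HD i k = h))).card}
      (2 * (l.choose h -
        ((Finset.Icc 2 l).filter (fun x => Even x)).sup
          (fun x => if x / 2 ≤ h then x.choose (x / 2) * (l - x).choose (h - x / 2)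
                    else 0))) := by
  classical
  set N : ℕ → ℕ := fun x => if x / 2 ≤ h then x.choose (x / 2) * (l - x).choose (h - x / 2)
      else 0 with hN
  set F : Finset ℕ := (Finset.Icc 2 l).filter (fun x => Even x) with hF
  set M : ℕ := F.sup N with hM
  set C : ℕ := l.choose h with hC
  -- error formula
  have Eform : ∀ k : Fin l → Bool,
      (Finset.univ.filter (fun i : Fin l → Bool =>
          Xor (HD i kstar = h) (HD i k = h))).card
        = 2 * (C - (Finset.univ.filter fun i : Fin l → Bool =>
            HD i kstar = h ∧ HD i k = h).card) ∧
      (Finset.univ.filter fun i : Fin l → Bool =>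
          HD i kstar = h ∧ HD i k = h).card ≤ C := by
    intro k
    have hx := SFLLAux.xor_card Finset.univ (fun i : Fin l → Bool => HD i kstar = h)
      (fun i => HD i k = h)
    rw [SFLLAux.card_hd kstar h, SFLLAux.card_hd k h] at hx
    have hB : (Finset.univ.filter fun i : Fin l → Bool =>
        HD i kstar = h ∧ HD i k = h).card ≤ C := by
      rw [hC, ← SFLLAux.card_hd kstar h]
      refine Finset.card_le_card ?_
      intro i hi
      simp only [mem_filter] at hi ⊢
      exact ⟨hi.1, hi.2.1⟩
    exact ⟨by omega, hB⟩
  -- B bound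
  have Bval : ∀ k : Fin l → Bool, k ≠ kstar →
      (Finset.univ.filter fun i : Fin l → Bool =>
          HD i kstar = h ∧ HD i k = h).card ≤ M := by
    intro k hk
    rw [SFLLAux.card_both kstar k h]
    set x := HD k kstar with hxdef
    by_cases hev : Even x ∧ x / 2 ≤ h
    · rw [if_pos hev]
      have hx1 : 1 ≤ x := by
        rw [hxdef, HD]
        rw [Nat.one_le_iff_ne_zero, ← Nat.pos_iff_ne_zero, Finset.card_pos]
        have : ∃ j, k j ≠ kstar j := by
          by_contra hcon
          push_neg at hcon
          exact hk (funext hcon)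
        obtain ⟨j, hj⟩ := this
        exact ⟨j, by simp [hj]⟩
      have hxl : x ≤ l := by
        rw [hxdef, HD]
        calc (Finset.univ.filter fun j => k j ≠ kstar j).card
            ≤ Finset.univ.card := Finset.card_filter_le _ _
          _ = l := by simp
      have hxF : x ∈ F := by
        rw [hF]
        simp only [Finset.mem_filter, Finset.mem_Icc]
        obtain ⟨r, hr⟩ := hev.1
        exact ⟨⟨by omega, hxl⟩, hev.1⟩
      have := Finset.le_sup (f := N) hxF
      rw [hN] at this
      simpa [hev.2] using this
    · rw [if_neg hev]
      exact Nat.zero_le _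
  constructor
  · -- membership: construct optimal key
    have hFne : F.Nonempty := ⟨2, by simp [hF]; omega⟩
    obtain ⟨x0, hx0F, hx0⟩ := Finset.exists_mem_eq_sup F hFne N
    have hx0mem : 2 ≤ x0 ∧ x0 ≤ l ∧ Even x0 := by
      rw [hF] at hx0F
      simp only [Finset.mem_filter, Finset.mem_Icc] at hx0F
      exact ⟨hx0F.1.1, hx0F.1.2, hx0F.2⟩
    set k0 : Fin l → Bool := fun j => if (j : ℕ) < x0 then !(kstar j) else kstar j with hk0
    have hHD : HD k0 kstar = x0 := by
      rw [HD]
      have : (Finset.univ.filter fun j : Fin l => k0 j ≠ kstar j)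
          = Finset.univ.filter fun j : Fin l => (j : ℕ) < x0 := by
        refine Finset.filter_congr fun j _ => ?_
        rw [hk0]
        by_cases hj : (j : ℕ) < x0 <;> simp [hj]
      rw [this, SFLLAux.card_lt_filter x0 hx0mem.2.1]
    have hk0ne : k0 ≠ kstar := by
      intro hcon
      have h0l : 0 < l := by omega
      have := congrFun hcon ⟨0, h0l⟩
      rw [hk0] at this
      simp only [show ((⟨0, h0l⟩ : Fin l) : ℕ) = 0 from rfl] at this
      rw [if_pos (by omega)] at this
      exact Bool.not_ne_self _ this
    refine ⟨k0, hk0ne, ?_⟩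
    have hBk0 : (Finset.univ.filter fun i : Fin l → Bool =>
        HD i kstar = h ∧ HD i k0 = h).card = M := by
      rw [SFLLAux.card_both kstar k0 h, hHD]
      rw [hM, hx0, hN]
      by_cases hle : x0 / 2 ≤ h <;> simp [hle, hx0mem.2.2]
    rw [(Eform k0).1, hBk0]
  · -- lower bound
    rintro c ⟨k, hk, rfl⟩
    obtain ⟨hE, hB⟩ := Eform k
    rw [hE]
    have := Bval k hk
    have : C - M ≤ C - (Finset.univ.filter fun i : Fin l → Bool =>
        HD i kstar = h ∧ HD i k = h).card := Nat.sub_le_sub_left this C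
    omega
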